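/- In the multi-period model with binary valuations (v_{ij} ∈ {0,1} for all i, j) and unit budgets (B_i = 1 for all i), assume there exists a feasible allocation with u_i > 0 for all i. Then a feasible allocation x with u_i(x_i) > 0 for all i is leximin-optimal if and only if it maximizes the Nash welfare Π_i u_i(x_i) over all feasible allocations; i.e., the set of leximin-optimal allocations equals the set of maximum-Nash-welfare allocations in the multi-period sum-utility model. -/

import Mathlib

open Finset

/-- Feasibility of a multi-period allocation: nonnegativity, per-period supply
constraints, and overall supply constraints. -/
def FeasibleMP (n m T : ℕ) (st : Fin m → Fin T → ℝ) (s : Fin m → ℝ)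
    (x : Fin n → Fin m → Fin T → ℝ) : Prop :=
  (∀ i j t, 0 ≤ x i j t) ∧ (∀ j t, ∑ i, x i j t ≤ st j t) ∧
    (∀ j, ∑ t, ∑ i, x i j t ≤ s j)

/-- The value at position `i` of the nondecreasing rearrangement of `v`. -/
noncomputable def sortedVal {n : ℕ} (v : Fin n → ℝ) (i : Fin n) : ℝ :=
  v (Tuple.sort v i)

/-- `v` is leximin-greater than `w`: after sorting both vectors in
nondecreasing order, at the first index where they differ `v` is strictly
larger. -/
noncomputable def LexGt {n : ℕ} (v w : Fin n → ℝ) : Prop :=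
  ∃ k : Fin n, (∀ i : Fin n, i < k → sortedVal v i = sortedVal w i) ∧
    sortedVal w k < sortedVal v k

open scoped Classical
set_option maxHeartbeats 1000000


def SPf {n m : ℕ} (c : Fin m → ℝ) (w : Fin n → Fin m → ℝ) : Prop :=
  (∀ i j, 0 ≤ w i j) ∧ ∀ j, ∑ i, w i j ≤ c j

def gu {n m : ℕ} (v : Fin n → Fin m → ℝ) (w : Fin n → Fin m → ℝ) (i : Fin n) : ℝ :=
  ∑ j, v i j * w i j

section LexTools
variable {n : ℕ}

lemma sortedVal_mono (v : Fin n → ℝ) : Monotone (sortedVal v) := Tuple.monotone_sort v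

lemma prod_sortedVal (v : Fin n → ℝ) : ∏ i, sortedVal v i = ∏ i, v i :=
  Equiv.prod_comp (Tuple.sort v) v

lemma card_filter_sortedVal (v : Fin n → ℝ) (p : ℝ → Prop) :
    (univ.filter (fun j => p (v j))).card = (univ.filter (fun i => p (sortedVal v i))).card := by
  exact (Finset.card_equiv (Tuple.sort v) (by intro i; rw [Finset.mem_filter, Finset.mem_filter]; simp [sortedVal])).symm

lemma mono_ge_of_count_le (f : Fin n → ℝ) (hf : Monotone f) (θ : ℝ) (K : Fin n)
    (h : (univ.filter (fun i => f i < θ)).card ≤ K.1) : θ ≤ f K := by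
  by_contra hlt
  push_neg at hlt
  have hsub : Finset.Iic K ⊆ univ.filter (fun i => f i < θ) := by
    intro i hi
    simp only [Finset.mem_Iic] at hi
    simp only [Finset.mem_filter, Finset.mem_univ, true_and]
    exact lt_of_le_of_lt (hf hi) hlt
  have := Finset.card_le_card hsub
  rw [Fin.card_Iic] at this
  omega

lemma mono_lt_of_count_gt (f : Fin n → ℝ) (hf : Monotone f) (θ : ℝ) (K : Fin n)
    (h : K.1 < (univ.filter (fun i => f i < θ)).card) : f K < θ := by
  by_contra hge
  push_neg at hge
  have hsub : univ.filter (fun i => f i < θ) ⊆ Finset.Iio K := by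
    intro i hi
    simp only [Finset.mem_filter, Finset.mem_univ, true_and] at hi
    simp only [Finset.mem_Iio]
    by_contra hK
    push_neg at hK
    exact absurd (lt_of_le_of_lt (le_trans hge (hf hK)) hi) (lt_irrefl _)
  have := Finset.card_le_card hsub
  rw [Fin.card_Iio] at this
  omega

lemma mono_le_of_count_gt (f : Fin n → ℝ) (hf : Monotone f) (a : ℝ) (K : Fin n)
    (h : K.1 < (univ.filter (fun i => f i ≤ a)).card) : f K ≤ a := by
  by_contra hge
  push_neg at hge
  have hsub : univ.filter (fun i => f i ≤ a) ⊆ Finset.Iio K := by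
    intro i hi
    simp only [Finset.mem_filter, Finset.mem_univ, true_and] at hi
    simp only [Finset.mem_Iio]
    by_contra hK
    push_neg at hK
    exact absurd (lt_of_lt_of_le hge (le_trans (hf hK) hi)) (lt_irrefl _)
  have := Finset.card_le_card hsub
  rw [Fin.card_Iio] at this
  omega

lemma sorted_trichotomy (v w : Fin n → ℝ) :
    (∀ i, sortedVal v i = sortedVal w i) ∨ LexGt v w ∨ LexGt w v := by
  by_cases h : ∀ i, sortedVal v i = sortedVal w i
  · exact Or.inl h
  · push_neg at h
    obtain ⟨D, hD⟩ : ∃ D : Finset (Fin n), D = univ.filter (fun i => sortedVal v i ≠ sortedVal w i) := ⟨_, rfl⟩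
    have hne : D.Nonempty := by
      obtain ⟨i, hi⟩ := h
      exact ⟨i, by simp [hD, hi]⟩
    obtain ⟨k, hk, hmin⟩ := D.exists_min_image id hne
    have heq : ∀ i, i < k → sortedVal v i = sortedVal w i := by
      intro i hik
      by_contra hne'
      have : i ∈ D := by simp [hD, hne']
      exact absurd (lt_of_le_of_lt (hmin i this) hik) (lt_irrefl _)
    have hkne : sortedVal v k ≠ sortedVal w k := by
      have := hk; simp [hD] at this; exact this
    rcases lt_or_gt_of_ne hkne with h1 | h1
    · exact Or.inr (Or.inr ⟨k, fun i hi => (heq i hi).symm, h1⟩)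
    · exact Or.inr (Or.inl ⟨k, heq, h1⟩)

lemma not_lexGt_of_level (v w : Fin n → ℝ) (θ : ℝ)
    (hagree : ∀ j, w j < θ → v j = w j)
    (hex : ∃ j, θ ≤ w j ∧ v j < θ) : ¬ LexGt v w := by
  obtain ⟨j0, hj0w, hj0v⟩ := hex
  set L : Finset (Fin n) := univ.filter (fun j => w j < θ) with hLdef
  have hj0L : j0 ∉ L := by simp [hLdef, not_lt]; exact hj0w
  have hln : L.card < n := by
    have : L ⊆ univ.erase j0 := fun i hi => Finset.mem_erase.mpr
      ⟨fun he => hj0L (he ▸ hi), Finset.mem_univ i⟩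
    have := Finset.card_le_card this
    rw [Finset.card_erase_of_mem (Finset.mem_univ j0), Finset.card_univ, Fintype.card_fin] at this
    have hn : 0 < n := Fin.pos j0
    omega
  set Kl : Fin n := ⟨L.card, hln⟩ with hKl
  -- w sorted at Kl is ≥ θ
  have hwKl : θ ≤ sortedVal w Kl := by
    apply mono_ge_of_count_le _ (sortedVal_mono w)
    rw [← card_filter_sortedVal w (fun a => a < θ)]
  -- v sorted at Kl is < θ
  have hvKl : sortedVal v Kl < θ := by
    apply mono_lt_of_count_gt _ (sortedVal_mono v)
    rw [← card_filter_sortedVal v (fun a => a < θ)]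
    have hsub : insert j0 L ⊆ univ.filter (fun j => v j < θ) := by
      intro i hi
      rcases Finset.mem_insert.mp hi with rfl | hiL
      · simp [hj0v]
      · simp only [hLdef, Finset.mem_filter, Finset.mem_univ, true_and] at hiL
        simp [hagree i hiL, hiL]
    have := Finset.card_le_card hsub
    rw [Finset.card_insert_of_notMem hj0L] at this
    simpa [hKl] using lt_of_lt_of_le (Nat.lt_succ_self _) this
  -- below Kl : v sorted ≤ w sorted
  have hbelow : ∀ i : Fin n, i < Kl → sortedVal v i ≤ sortedVal w i := by
    intro i hi
    set a := sortedVal w i with ha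
    have hath : a < θ := by
      apply mono_lt_of_count_gt _ (sortedVal_mono w)
      rw [← card_filter_sortedVal w (fun x => x < θ)]
      exact hi
    have hcount : i.1 < (univ.filter (fun j => v j ≤ a)).card := by
      have h1 : i.1 < (univ.filter (fun j => w j ≤ a)).card := by
        rw [card_filter_sortedVal w (fun x => x ≤ a)]
        have hsub : Finset.Iic i ⊆ univ.filter (fun k => sortedVal w k ≤ a) := by
          intro k hk
          simp only [Finset.mem_Iic] at hk
          simp only [Finset.mem_filter, Finset.mem_univ, true_and]
          exact sortedVal_mono w hk
        have := Finset.card_le_card hsub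
        rw [Fin.card_Iic] at this
        omega
      refine lt_of_lt_of_le h1 (Finset.card_le_card ?_)
      intro k hk
      simp only [Finset.mem_filter, Finset.mem_univ, true_and] at hk ⊢
      have hkth : w k < θ := lt_of_le_of_lt hk hath
      rw [hagree k hkth]; exact hk
    rw [card_filter_sortedVal v (fun x => x ≤ a)] at hcount
    exact mono_le_of_count_gt _ (sortedVal_mono v) a i hcount
  rintro ⟨k, heq, hlt⟩
  rcases lt_trichotomy k Kl with h1 | h1 | h1
  · have := hbelow k h1
    linarith
  · subst h1
    linarith
  · have := heq Kl h1
    linarith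

end LexTools

section SP
variable {n m : ℕ}

/-- residual step relation: `a` can grab from `b` -/
def stepR (v : Fin n → Fin m → ℝ) (x : Fin n → Fin m → ℝ) (a b : Fin n) : Prop :=
  ∃ j, v a j = 1 ∧ v b j = 1 ∧ 0 < x b j

lemma aug (v : Fin n → Fin m → ℝ) (x : Fin n → Fin m → ℝ)
    (hx0 : ∀ i j, 0 ≤ x i j) (i k : Fin n)
    (h : Relation.ReflTransGen (stepR v x) i k) :
    ∃ ε : ℝ, 0 < ε ∧ ∃ C : ℝ, 0 ≤ C ∧ ∀ δ : ℝ, 0 < δ → δ ≤ ε → ∃ z : Fin n → Fin m → ℝ,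
      (∀ l j, 0 ≤ z l j) ∧
      (∀ j, ∑ l, z l j = ∑ l, x l j) ∧
      (∀ l j, x l j - C * δ ≤ z l j) ∧
      (∀ l, gu v z l = gu v x l +
        δ * ((if l = i then (1:ℝ) else 0) - (if l = k then (1:ℝ) else 0))) := by
  induction h with
  | refl =>
    refine ⟨1, one_pos, 0, le_refl _, fun δ hδ hδ1 => ⟨x, hx0, fun j => rfl, ?_, ?_⟩⟩
    · intro l j; simp
    · intro l; simp
  | @tail b q hib e ih =>
    obtain ⟨ε, hε, C, hC, hall⟩ := ih
    by_cases hbq : b = q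
    · -- trivial step, reuse the IH data
      subst hbq
      exact ⟨ε, hε, C, hC, hall⟩
    obtain ⟨j, hvb, hvq, hxq⟩ := e
    refine ⟨min ε (x q j / (2 * (C + 1))), by positivity, C + 1, by linarith, ?_⟩
    intro δ hδ hδ1
    have hδε : δ ≤ ε := le_trans hδ1 (min_le_left _ _)
    have hδ2 : δ ≤ x q j / (2 * (C + 1)) := le_trans hδ1 (min_le_right _ _)
    have hpos : (0:ℝ) < 2 * (C + 1) := by linarith
    have hkey : (C + 1) * δ ≤ x q j / 2 := by
      have := (le_div_iff₀ hpos).mp hδ2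
      linarith
    obtain ⟨z, hz0, hzcol, hzinv, hzgu⟩ := hall δ hδ hδε
    have hzq : x q j / 2 ≤ z q j := by
      nlinarith [hzinv q j, hkey, hδ, hC]
    set z' : Fin n → Fin m → ℝ := fun l j' =>
      if l = b ∧ j' = j then z l j' + δ else if l = q ∧ j' = j then z l j' - δ else z l j'
      with hz'
    have hz'q : z' q j = z q j - δ := by simp [hz', hbq, Ne.symm hbq]
    have hz'b : z' b j = z b j + δ := by simp [hz']
    have hz'other : ∀ l j', ¬(l = b ∧ j' = j) → ¬(l = q ∧ j' = j) → z' l j' = z l j' := by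
      intro l j' h1 h2; simp [hz', h1, h2]
    have hqb : ¬ q = b := fun h => hbq h.symm
    have hz'pt : ∀ l j', z' l j' =
        z l j' + (if l = b ∧ j' = j then δ else 0) - (if l = q ∧ j' = j then δ else 0) := by
      intro l j'
      by_cases h1 : l = b ∧ j' = j
      · have h2 : ¬(l = q ∧ j' = j) := fun h2 => hbq (h1.1.symm.trans h2.1)
        simp [hz', h1, h2, hbq]
      · by_cases h2 : l = q ∧ j' = j <;> simp [hz', h1, h2, hbq, hqb]
    have hδq : δ ≤ z q j := by nlinarith [hzq, hkey, hδ, hC]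
    refine ⟨z', ?_, ?_, ?_, ?_⟩
    · intro l j'
      by_cases h1 : l = b ∧ j' = j
      · rw [(show z' l j' = z l j' + δ by
          have h2 : ¬(l = q ∧ j' = j) := fun h2 => hbq (h1.1.symm.trans h2.1)
          simp [hz', h1, h2])]
        linarith [hz0 l j']
      · by_cases h2 : l = q ∧ j' = j
        · obtain ⟨rfl, rfl⟩ := h2
          rw [hz'q]; linarith
        · rw [hz'other l j' h1 h2]; exact hz0 l j'
    · intro j'
      have : ∀ l, z' l j' = z l j' + (if l = b ∧ j' = j then δ else 0)
          - (if l = q ∧ j' = j then δ else 0) := fun l => hz'pt l j'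
      rw [Finset.sum_congr rfl (fun l _ => this l)]
      rw [Finset.sum_sub_distrib, Finset.sum_add_distrib]
      by_cases hj : j' = j
      · subst hj
        simp only [and_true]
        rw [Finset.sum_ite_eq' univ b (fun _ => δ), Finset.sum_ite_eq' univ q (fun _ => δ)]
        simp [hzcol j']
      · simp only [hj, and_false, if_false]
        simp [hzcol j']
    · intro l j'
      by_cases h2 : l = q ∧ j' = j
      · obtain ⟨rfl, rfl⟩ := h2
        rw [hz'q]
        have := hzinv l j'
        nlinarith [hδ]
      · by_cases h1 : l = b ∧ j' = j
        · rw [(show z' l j' = z l j' + δ by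
            have h2' : ¬(l = q ∧ j' = j) := h2
            simp [hz', h1, h2'])]
          have := hzinv l j'
          nlinarith [hδ]
        · rw [hz'other l j' h1 h2]
          have := hzinv l j'
          nlinarith [hδ]
    · intro l
      have hgupt : gu v z' l = gu v z l + v l j *
          ((if l = b then δ else 0) - (if l = q then δ else 0)) := by
        unfold gu
        rw [Finset.sum_congr rfl (fun j' _ => by rw [hz'pt l j']; ring_nf :
          ∀ j' ∈ univ, v l j' * z' l j' = v l j' * z l j'
            + v l j' * (if l = b ∧ j' = j then δ else 0)
            - v l j' * (if l = q ∧ j' = j then δ else 0))]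
        rw [Finset.sum_sub_distrib, Finset.sum_add_distrib]
        have e1 : ∑ j', v l j' * (if l = b ∧ j' = j then δ else 0)
            = v l j * (if l = b then δ else 0) := by
          by_cases hb : l = b
          · simp only [hb, true_and]
            rw [Finset.sum_eq_single j]
            · simp
            · intro j'' _ hne; simp [hne]
            · intro habs; exact absurd (Finset.mem_univ j) habs
          · simp [hb]
        have e2 : ∑ j', v l j' * (if l = q ∧ j' = j then δ else 0)
            = v l j * (if l = q then δ else 0) := by
          by_cases hq : l = q
          · simp only [hq, true_and]
            rw [Finset.sum_eq_single j]
            · simp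
            · intro j'' _ hne; simp [hne]
            · intro habs; exact absurd (Finset.mem_univ j) habs
          · simp [hq]
        rw [e1, e2]; ring
      rw [hgupt, hzgu l]
      by_cases hb : l = b <;> by_cases hq : l = q
      · exact absurd (hb.symm.trans hq) hbq
      · simp only [hgupt, hzgu, hb, hq, hvb, hbq, if_true, if_false, ite_false, ite_true,
          one_mul]
        split_ifs <;> ring
      · simp only [hgupt, hzgu, hb, hq, hvq, hqb, if_true, if_false, ite_false, ite_true,
          one_mul]
        split_ifs <;> ring
      · simp [hb, hq]

end SP

section Exchange
variable {n m : ℕ} (v : Fin n → Fin m → ℝ) (c : Fin m → ℝ)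
variable (hv : ∀ i j, v i j = 0 ∨ v i j = 1)

include hv in
lemma exchange {x y : Fin n → Fin m → ℝ} (hx : SPf c x) (hy : SPf c y)
    (i : Fin n) (hi : gu v x i < gu v y i) :
    ∃ ε : ℝ, 0 < ε ∧ ∃ z : Fin n → Fin m → ℝ, SPf c z ∧
      ((∀ l, gu v z l = gu v x l + (if l = i then ε else 0)) ∨
       (∃ k, gu v y k < gu v x k ∧
         ∀ l, gu v z l = gu v x l +
           ε * ((if l = i then (1:ℝ) else 0) - (if l = k then (1:ℝ) else 0)))) := by
  classical
  -- pruned allocation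
  set xh : Fin n → Fin m → ℝ := fun l j => v l j * x l j with hxh
  have hxh0 : ∀ l j, 0 ≤ xh l j := by
    intro l j; rcases hv l j with h | h <;> simp [hxh, h, hx.1 l j]
  have hxhle : ∀ l j, xh l j ≤ x l j := by
    intro l j; rcases hv l j with h | h <;> simp [hxh, h, hx.1 l j]
  have hxhcol : ∀ j, ∑ l, xh l j ≤ c j :=
    fun j => le_trans (Finset.sum_le_sum (fun l _ => hxhle l j)) (hx.2 j)
  have hxhgu : ∀ l, gu v xh l = gu v x l := by
    intro l
    unfold gu
    refine Finset.sum_congr rfl (fun j _ => ?_)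
    rcases hv l j with h | h <;> simp [hxh, h]
  have hxhSP : SPf c xh := ⟨hxh0, hxhcol⟩
  -- reachability
  set Reach : Fin n → Prop := fun l => Relation.ReflTransGen (stepR v xh) i l with hReach
  by_cases hfree : ∃ k, Reach k ∧ ∃ j, v k j = 1 ∧ ∑ l, xh l j < c j
  · -- Case A: free capacity reachable
    obtain ⟨k, hk, j, hvkj, hresid⟩ := hfree
    obtain ⟨ε₀, hε₀, C, hC, hall⟩ := aug v xh hxh0 i k hk
    set ε : ℝ := min ε₀ (c j - ∑ l, xh l j) with hεdef
    have hεpos : 0 < ε := lt_min hε₀ (by linarith)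
    obtain ⟨z, hz0, hzcol, hzinv, hzgu⟩ := hall ε hεpos (min_le_left _ _)
    set z' : Fin n → Fin m → ℝ := fun l j' => if l = k ∧ j' = j then z l j' + ε else z l j'
      with hz'
    have hz'pt : ∀ l j', z' l j' = z l j' + (if l = k ∧ j' = j then ε else 0) := by
      intro l j'; by_cases h : l = k ∧ j' = j <;> simp [hz', h]
    refine ⟨ε, hεpos, z', ⟨?_, ?_⟩, Or.inl ?_⟩
    · intro l j'
      rw [hz'pt]
      by_cases h : l = k ∧ j' = j <;> simp [h] <;>
        linarith [hz0 k j, hz0 l j', hεpos]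
    · intro j'
      rw [Finset.sum_congr rfl (fun l _ => hz'pt l j'), Finset.sum_add_distrib]
      by_cases hj : j' = j
      · subst hj
        simp only [and_true]
        rw [Finset.sum_ite_eq' univ k (fun _ => ε)]
        simp only [Finset.mem_univ, if_true]
        rw [hzcol j']
        have : ε ≤ c j' - ∑ l, xh l j' := min_le_right _ _
        linarith
      · simp only [hj, and_false, if_false, Finset.sum_const_zero, add_zero]
        rw [hzcol j']
        exact hxhcol j'
    · intro l
      have hgu' : gu v z' l = gu v z l + v l j * (if l = k then ε else 0) := by
        unfold gu
        rw [Finset.sum_congr rfl (fun j' _ => by rw [hz'pt l j']; ring_nf :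
          ∀ j' ∈ univ, v l j' * z' l j' = v l j' * z l j'
            + v l j' * (if l = k ∧ j' = j then ε else 0))]
        rw [Finset.sum_add_distrib]
        congr 1
        by_cases hk' : l = k
        · simp only [hk', true_and]
          rw [Finset.sum_eq_single j]
          · simp
          · intro j'' _ hne; simp [hne]
          · intro habs; exact absurd (Finset.mem_univ j) habs
        · simp [hk']
      rw [hgu', hzgu l, hxhgu l]
      rcases eq_or_ne l k with rfl | hk'
      · rcases eq_or_ne l i with rfl | hi'
        · simp [hvkj]
        · simp [hvkj, hi'] <;> ring_nf
      · rcases eq_or_ne l i with rfl | hi'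
        · simp [hk'] <;> ring_nf
        · simp only [if_neg hk', if_neg hi', mul_zero]
          ring
  · -- Case B: no free capacity; find a reachable loser
    push_neg at hfree
    have hclaim : ∃ k, Reach k ∧ gu v y k < gu v x k := by
      by_contra hcon
      push_neg at hcon
      set R : Finset (Fin n) := univ.filter Reach with hR
      have hiR : i ∈ R := by simp [hR, hReach]; exact Relation.ReflTransGen.refl
      set JR : Finset (Fin m) := univ.filter (fun j => ∃ k ∈ R, v k j = 1) with hJR
      -- sum over R of gu xh = sum over JR of c
      have hA : ∑ k ∈ R, gu v xh k = ∑ j ∈ JR, c j := by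
        unfold gu
        rw [Finset.sum_comm]
        rw [← Finset.sum_subset (Finset.subset_univ JR)
          (by
            intro j _ hjJR
            simp only [hJR, Finset.mem_filter, Finset.mem_univ, true_and, not_exists] at hjJR
            push_neg at hjJR
            refine Finset.sum_eq_zero (fun k hk => ?_)
            rcases hv k j with h | h
            · simp [h]
            · exact absurd h (hjJR k hk))]
        refine Finset.sum_congr rfl (fun j hj => ?_)
        simp only [hJR, Finset.mem_filter, Finset.mem_univ, true_and] at hj
        obtain ⟨k0, hk0R, hvk0⟩ := hj
        have hk0Reach : Reach k0 := by simpa [hR] using hk0R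
        -- all of c j is used, and only by reachable buyers
        have hcolfull : ∑ l, xh l j = c j := by
          exact le_antisymm (hxhcol j) (hfree k0 hk0Reach j hvk0)
        rw [← hcolfull]
        rw [← Finset.sum_subset (Finset.subset_univ R)
          (by
            intro l _ hlR
            by_cases hxl : xh l j = 0
            · rcases hv l j with h | h <;> simp [h, hxl]
            · exfalso
              have hxlpos : 0 < xh l j := lt_of_le_of_ne (hxh0 l j) (Ne.symm hxl)
              have hvl : v l j = 1 := by
                rcases hv l j with h | h
                · exfalso; apply hxl; simp [hxh, h]
                · exact h
              have : Reach l := Relation.ReflTransGen.tail hk0Reach ⟨j, hvk0, hvl, hxlpos⟩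
              exact hlR (by simp [hR]; exact this))]
        refine Finset.sum_congr rfl (fun l _ => ?_)
        rcases hv l j with h | h <;> simp [hxh, h]
      -- sum over R of gu y ≤ sum over JR of c
      have hB : ∑ k ∈ R, gu v y k ≤ ∑ j ∈ JR, c j := by
        unfold gu
        rw [Finset.sum_comm]
        rw [← Finset.sum_subset (Finset.subset_univ JR)
          (by
            intro j _ hjJR
            simp only [hJR, Finset.mem_filter, Finset.mem_univ, true_and, not_exists] at hjJR
            push_neg at hjJR
            refine Finset.sum_eq_zero (fun k hk => ?_)
            rcases hv k j with h | h
            · simp [h]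
            · exact absurd h (hjJR k hk))]
        refine Finset.sum_le_sum (fun j _ => ?_)
        calc ∑ k ∈ R, v k j * y k j ≤ ∑ k ∈ R, y k j := by
              refine Finset.sum_le_sum (fun k _ => ?_)
              rcases hv k j with h | h <;> simp [h, hy.1 k j]
          _ ≤ ∑ k, y k j := Finset.sum_le_sum_of_subset_of_nonneg (Finset.subset_univ R)
              (fun k _ _ => hy.1 k j)
          _ ≤ c j := hy.2 j
      have hstrict : ∑ k ∈ R, gu v xh k < ∑ k ∈ R, gu v y k := by
        refine Finset.sum_lt_sum (fun k hk => ?_) ⟨i, hiR, ?_⟩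
        · rw [hxhgu k]
          exact hcon k (by simpa [hR] using hk)
        · rw [hxhgu i]; exact hi
      linarith
    obtain ⟨k, hk, hky⟩ := hclaim
    obtain ⟨ε₀, hε₀, C, hC, hall⟩ := aug v xh hxh0 i k hk
    obtain ⟨z, hz0, hzcol, hzinv, hzgu⟩ := hall ε₀ hε₀ (le_refl _)
    refine ⟨ε₀, hε₀, z, ⟨hz0, fun j => by rw [hzcol j]; exact hxhcol j⟩, Or.inr ⟨k, hky, ?_⟩⟩
    intro l
    rw [hzgu l, hxhgu l]

end Exchange

section Nash
variable {n m : ℕ} (v : Fin n → Fin m → ℝ) (c : Fin m → ℝ) (d : Fin n → ℝ)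

noncomputable def Fobj (w : Fin n → Fin m → ℝ) : ℝ := ∏ i, max (gu v w i - d i) 0

lemma exists_nash (w0 : Fin n → Fin m → ℝ) (hw0 : SPf c w0) :
    ∃ w, SPf c w ∧ ∀ w', SPf c w' → Fobj v d w' ≤ Fobj v d w := by
  have hS : IsCompact {w : Fin n → Fin m → ℝ | SPf c w} := by
    have hsub : {w : Fin n → Fin m → ℝ | SPf c w} ⊆
        Set.Icc (fun _ _ => 0) (fun _ j => max (c j) 0) := by
      intro w hw
      constructor
      · intro i; intro j; exact hw.1 i j
      · intro i; intro j
        refine le_max_of_le_left ?_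
        calc w i j ≤ ∑ l, w l j :=
              Finset.single_le_sum (fun l _ => hw.1 l j) (Finset.mem_univ i)
          _ ≤ c j := hw.2 j
    refine IsCompact.of_isClosed_subset isCompact_Icc ?_ hsub
    have h1 : IsClosed {w : Fin n → Fin m → ℝ | ∀ i j, 0 ≤ w i j} := by
      have he : {w : Fin n → Fin m → ℝ | ∀ i j, 0 ≤ w i j}
          = ⋂ i, ⋂ j, {w : Fin n → Fin m → ℝ | 0 ≤ w i j} := by
        ext w; simp
      rw [he]
      refine isClosed_iInter (fun i => isClosed_iInter (fun j => ?_))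
      exact isClosed_le continuous_const (by fun_prop)
    have h2 : IsClosed {w : Fin n → Fin m → ℝ | ∀ j, ∑ i, w i j ≤ c j} := by
      have he : {w : Fin n → Fin m → ℝ | ∀ j, ∑ i, w i j ≤ c j}
          = ⋂ j, {w : Fin n → Fin m → ℝ | ∑ i, w i j ≤ c j} := by
        ext w; simp
      rw [he]
      refine isClosed_iInter (fun j => ?_)
      refine isClosed_le ?_ continuous_const
      exact continuous_finset_sum _ (fun i _ => by fun_prop)
    have : {w : Fin n → Fin m → ℝ | SPf c w}
        = {w | ∀ i j, 0 ≤ w i j} ∩ {w | ∀ j, ∑ i, w i j ≤ c j} := by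
      ext w; exact ⟨fun h => ⟨h.1, h.2⟩, fun h => ⟨h.1, h.2⟩⟩
    rw [this]; exact h1.inter h2
  have hcont : Continuous (Fobj v d (n := n) (m := m)) := by
    refine continuous_finset_prod _ (fun i _ => ?_)
    refine Continuous.max ?_ continuous_const
    refine Continuous.sub ?_ continuous_const
    exact continuous_finset_sum _ (fun j _ => by fun_prop)
  obtain ⟨w, hwS, hmax⟩ := hS.exists_isMaxOn ⟨w0, hw0⟩ hcont.continuousOn
  exact ⟨w, hwS, fun w' hw' => hmax hw'⟩

lemma SPf.combo {w1 w2 : Fin n → Fin m → ℝ} (h1 : SPf c w1) (h2 : SPf c w2)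
    {t : ℝ} (ht0 : 0 ≤ t) (ht1 : t ≤ 1) :
    SPf c (fun i j => (1 - t) * w1 i j + t * w2 i j) := by
  constructor
  · intro i j
    show 0 ≤ (1 - t) * w1 i j + t * w2 i j
    have a1 := h1.1 i j; have a2 := h2.1 i j
    nlinarith
  · intro j
    rw [Finset.sum_add_distrib]
    have e1 : ∑ i, (1-t) * w1 i j = (1-t) * ∑ i, w1 i j := by rw [Finset.mul_sum]
    have e2 : ∑ i, t * w2 i j = t * ∑ i, w2 i j := by rw [Finset.mul_sum]
    rw [e1, e2]
    have a1 := h1.2 j; have a2 := h2.2 j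
    nlinarith [mul_le_mul_of_nonneg_left a1 (by linarith : (0:ℝ) ≤ 1 - t),
      mul_le_mul_of_nonneg_left a2 ht0]
lemma gu_combo (w1 w2 : Fin n → Fin m → ℝ) {t : ℝ} (l : Fin n) :
    gu v (fun i j => (1 - t) * w1 i j + t * w2 i j) l = (1-t) * gu v w1 l + t * gu v w2 l := by
  unfold gu
  rw [Finset.mul_sum, Finset.mul_sum, ← Finset.sum_add_distrib]
  exact Finset.sum_congr rfl (fun j _ => by ring)

lemma nash_unique {wst w : Fin n → Fin m → ℝ} (hwst : SPf c wst) (hw : SPf c w)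
    (hmax : ∀ w', SPf c w' → Fobj v d w' ≤ Fobj v d wst)
    (hpos : ∀ i, 0 < gu v wst i - d i) (hpos' : ∀ i, 0 < gu v w i - d i)
    (heq : ∏ i, (gu v w i - d i) = ∏ i, (gu v wst i - d i)) :
    ∀ i, gu v w i - d i = gu v wst i - d i := by
  by_contra hne
  push_neg at hne
  obtain ⟨i0, hi0⟩ := hne
  set a : Fin n → ℝ := fun i => gu v w i - d i with ha
  set b : Fin n → ℝ := fun i => gu v wst i - d i with hb
  set mid : Fin n → Fin m → ℝ := fun i j => (1 - (1/2 : ℝ)) * wst i j + (1/2 : ℝ) * w i j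
    with hmid
  have hmidSP : SPf c mid := SPf.combo c hwst hw (by norm_num) (by norm_num)
  have hmidgu : ∀ l, gu v mid l - d l = (b l + a l) / 2 := by
    intro l
    rw [hmid, gu_combo]
    simp only [ha, hb]
    ring
  have hmidpos : ∀ l, 0 < gu v mid l - d l := by
    intro l; rw [hmidgu l]
    have := hpos l; have := hpos' l
    simp only [ha, hb] at *
    linarith
  have hFw : Fobj v d mid = ∏ l, ((b l + a l)/2) := by
    unfold Fobj
    refine Finset.prod_congr rfl (fun l _ => ?_)
    rw [max_eq_left (le_of_lt (hmidpos l)), hmidgu l]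
  have hFst : Fobj v d wst = ∏ l, b l := by
    unfold Fobj
    refine Finset.prod_congr rfl (fun l _ => max_eq_left (le_of_lt (hpos l)))
  have hsq : (∏ l, ((b l + a l)/2))^2 > (∏ l, b l)^2 := by
    have hptle : ∀ l ∈ univ, b l * a l ≤ ((b l + a l)/2)^2 := by
      intro l _
      have key : ((b l + a l)/2)^2 - b l * a l = ((b l - a l)/2)^2 := by ring
      linarith [sq_nonneg ((b l - a l)/2), key]
    have hptlt : b i0 * a i0 < ((b i0 + a i0)/2)^2 := by
      have hne0 : b i0 - a i0 ≠ 0 := sub_ne_zero.mpr (Ne.symm hi0)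
      have key : ((b i0 + a i0)/2)^2 - b i0 * a i0 = ((b i0 - a i0)/2)^2 := by ring
      have hpos2 : 0 < ((b i0 - a i0)/2)^2 := by positivity
      linarith
    have h1 : ∏ l, (b l * a l) < ∏ l, ((b l + a l)/2)^2 := by
      refine Finset.prod_lt_prod (fun l _ => ?_) (fun l _ => hptle l (Finset.mem_univ l)) ?_
      · exact mul_pos (hpos l) (hpos' l)
      · exact ⟨i0, Finset.mem_univ i0, hptlt⟩
    have h2 : ∏ l, (b l * a l) = (∏ l, b l) * (∏ l, a l) := Finset.prod_mul_distrib
    have h3 : ∏ l, ((b l + a l)/2)^2 = (∏ l, ((b l + a l)/2))^2 := by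
      rw [← Finset.prod_pow]
    rw [h2, h3] at h1
    have : ∏ l, a l = ∏ l, b l := heq
    rw [this] at h1
    nlinarith [h1]
  have hmax' := hmax mid hmidSP
  rw [hFw, hFst] at hmax'
  have hbpos : 0 < ∏ l, b l := Finset.prod_pos (fun l _ => hpos l)
  have hXpos : 0 < ∏ l, ((b l + a l)/2) := by
    refine Finset.prod_pos (fun l _ => ?_)
    have := hmidpos l
    rw [hmidgu l] at this
    exact this
  have := pow_le_pow_left₀ hXpos.le hmax' 2
  linarith

end Nash

section L2
variable {n m : ℕ} (v : Fin n → Fin m → ℝ) (c : Fin m → ℝ) (d : Fin n → ℝ)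

lemma prod_two_point_lt (f g : Fin n → ℝ) (i k : Fin n) (hik : i ≠ k)
    (hposf : ∀ l, 0 < f l) (hposg : ∀ l, 0 < g l)
    (hsame : ∀ l, l ≠ i → l ≠ k → g l = f l)
    (hlt : f i * f k < g i * g k) : ∏ l, f l < ∏ l, g l := by
  classical
  have hkmem : k ∈ univ.erase i := Finset.mem_erase.mpr ⟨Ne.symm hik, Finset.mem_univ k⟩
  have ef : ∏ l, f l = f i * (f k * ∏ l ∈ (univ.erase i).erase k, f l) := by
    rw [← Finset.mul_prod_erase univ f (Finset.mem_univ i),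
      ← Finset.mul_prod_erase (univ.erase i) f hkmem]
  have eg : ∏ l, g l = g i * (g k * ∏ l ∈ (univ.erase i).erase k, g l) := by
    rw [← Finset.mul_prod_erase univ g (Finset.mem_univ i),
      ← Finset.mul_prod_erase (univ.erase i) g hkmem]
  have erest : ∏ l ∈ (univ.erase i).erase k, g l = ∏ l ∈ (univ.erase i).erase k, f l := by
    refine Finset.prod_congr rfl (fun l hl => ?_)
    have h1 := Finset.mem_erase.mp hl
    have h2 := Finset.mem_erase.mp h1.2
    exact hsame l h2.1 h1.1
  have hPpos : 0 < ∏ l ∈ (univ.erase i).erase k, f l :=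
    Finset.prod_pos (fun l _ => hposf l)
  rw [ef, eg, erest, ← mul_assoc, ← mul_assoc]
  exact mul_lt_mul_of_pos_right hlt hPpos

lemma nash_is_leximin (hv : ∀ i j, v i j = 0 ∨ v i j = 1)
    {wst : Fin n → Fin m → ℝ} (hwst : SPf c wst)
    (hmax : ∀ w', SPf c w' → Fobj v d w' ≤ Fobj v d wst)
    (hpos : ∀ i, 0 < gu v wst i - d i)
    {w : Fin n → Fin m → ℝ} (hw : SPf c w) :
    ¬ LexGt (fun i => gu v w i - d i) (fun i => gu v wst i - d i) := by
  classical
  intro hlex0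
  obtain ⟨u', hu'⟩ : ∃ f : Fin n → ℝ, f = fun i => gu v w i - d i := ⟨_, rfl⟩
  obtain ⟨u0, hu0⟩ : ∃ f : Fin n → ℝ, f = fun i => gu v wst i - d i := ⟨_, rfl⟩
  have hlex : LexGt u' u0 := by rw [hu', hu0]; exact hlex0
  obtain ⟨Cset, hCset⟩ : ∃ S : Finset (Fin n), S = univ.filter (fun l => u' l ≠ u0 l) := ⟨_, rfl⟩
  have hCne : Cset.Nonempty := by
    by_contra hemp
    rw [Finset.not_nonempty_iff_eq_empty] at hemp
    have hall : ∀ l, u' l = u0 l := by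
      intro l
      by_contra hne
      have : l ∈ Cset := by simp [hCset, hne]
      rw [hemp] at this
      exact absurd this (Finset.notMem_empty l)
    have : u' = u0 := funext hall
    obtain ⟨k, _, hk⟩ := hlex
    rw [this] at hk
    exact absurd hk (lt_irrefl _)
  obtain ⟨i0, hi0C, hmin⟩ := Cset.exists_min_image u0 hCne
  obtain ⟨β, hβ⟩ : ∃ b : ℝ, b = u0 i0 := ⟨_, rfl⟩
  rw [← hβ] at hmin
  by_cases hcase : ∃ k', u0 k' = β ∧ u' k' < u0 k'
  · obtain ⟨k', hk1, hk2⟩ := hcase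
    refine not_lexGt_of_level u' u0 β ?_ ?_ hlex
    · intro j hj
      by_contra hne
      have hjC : j ∈ Cset := by simp [hCset, hne]
      exact absurd (lt_of_le_of_lt (hmin j hjC) hj) (lt_irrefl _)
    · exact ⟨k', le_of_eq hk1.symm, by rw [hk1] at hk2; exact hk2⟩
  · push_neg at hcase
    have hi0ne : u' i0 ≠ u0 i0 := by
      have := hi0C; simp [hCset] at this; exact this
    have hu'i0 : u0 i0 < u' i0 :=
      lt_of_le_of_ne (hcase i0 hβ.symm) (Ne.symm hi0ne)
    have hgu : gu v wst i0 < gu v w i0 := by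
      simp only [hu', hu0] at hu'i0; linarith
    obtain ⟨ε, hε, z, hzSP, hbr⟩ := exchange v c hv hwst hw i0 hgu
    have hu0l : ∀ l, u0 l = gu v wst l - d l := fun l => by rw [hu0]
    have hu'l : ∀ l, u' l = gu v w l - d l := fun l => by rw [hu']
    rcases hbr with hb1 | ⟨k, hky, hb2⟩
    · -- single increase
      have hzu : ∀ l, gu v z l - d l = (gu v wst l - d l) + (if l = i0 then ε else 0) := by
        intro l; rw [hb1 l]; ring
      have hzpos : ∀ l, 0 < gu v z l - d l := by
        intro l
        rw [hzu l]
        have h1 := hpos l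
        by_cases h : l = i0
        · rw [if_pos h]; linarith
        · rw [if_neg h]; linarith
      have hF : Fobj v d wst < Fobj v d z := by
        unfold Fobj
        rw [Finset.prod_congr rfl (fun l _ => max_eq_left (le_of_lt (hpos l))),
          Finset.prod_congr rfl (fun l _ => max_eq_left (le_of_lt (hzpos l)))]
        refine Finset.prod_lt_prod (fun l _ => hpos l) (fun l _ => ?_) ⟨i0, Finset.mem_univ i0, ?_⟩
        · rw [hzu l]
          by_cases h : l = i0
          · rw [if_pos h]; linarith
          · rw [if_neg h]; linarith
        · rw [hzu i0, if_pos rfl]; linarith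
      exact absurd (hmax z hzSP) (not_le.mpr hF)
    · -- transfer branch
      have hu'k : u' k < u0 k := by rw [hu'l k, hu0l k]; linarith
      have hkC : k ∈ Cset := by simp [hCset]; exact ne_of_lt hu'k
      have hβk : β < u0 k := by
        rcases lt_or_eq_of_le (hmin k hkC) with h | h
        · exact h
        · exact absurd hu'k (not_lt.mpr (h ▸ hcase k h.symm))
      have hki0 : i0 ≠ k := fun h => absurd (hβ.trans (by rw [h])) (ne_of_lt hβk)
      obtain ⟨δ, hδdef⟩ : ∃ x : ℝ, x = min ε ((u0 k - β)/2) := ⟨_, rfl⟩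
      have hδpos : 0 < δ := by rw [hδdef]; exact lt_min hε (by linarith)
      have hδε : δ ≤ ε := by rw [hδdef]; exact min_le_left _ _
      have hδk : δ ≤ (u0 k - β)/2 := by rw [hδdef]; exact min_le_right _ _
      obtain ⟨t, ht⟩ : ∃ x : ℝ, x = δ / ε := ⟨_, rfl⟩
      have ht0 : 0 ≤ t := by rw [ht]; exact le_of_lt (div_pos hδpos hε)
      have ht1 : t ≤ 1 := by rw [ht, div_le_one hε]; exact hδε
      obtain ⟨z', hz'⟩ : ∃ f : Fin n → Fin m → ℝ,
          f = fun i j => (1 - t) * wst i j + t * z i j := ⟨_, rfl⟩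
      have hz'SP : SPf c z' := by rw [hz']; exact SPf.combo c hwst hzSP ht0 ht1
      have htε : t * ε = δ := by rw [ht]; field_simp
      have hz'u : ∀ l, gu v z' l - d l
          = (gu v wst l - d l) + δ * ((if l = i0 then (1:ℝ) else 0) - (if l = k then (1:ℝ) else 0)) := by
        intro l
        rw [hz', gu_combo, hb2 l, ← htε]
        ring
      have hβpos : 0 < β := by rw [hβ, hu0l i0]; exact hpos i0
      have hg1 : gu v z' i0 - d i0 = β + δ := by
        rw [hz'u i0, if_pos rfl, if_neg hki0, hβ, hu0l i0]; ring
      have hg2 : gu v z' k - d k = u0 k - δ := by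
        rw [hz'u k, if_neg (Ne.symm hki0), if_pos rfl, hu0l k]; ring
      have hz'pos : ∀ l, 0 < gu v z' l - d l := by
        intro l
        by_cases hi' : l = i0
        · subst hi'; rw [hg1]; linarith
        · by_cases hk' : l = k
          · subst hk'; rw [hg2, hu0l l]
            rw [hu0l l] at hβk hδk
            linarith
          · rw [hz'u l, if_neg hi', if_neg hk']
            have := hpos l; linarith
      have hF : Fobj v d wst < Fobj v d z' := by
        unfold Fobj
        rw [Finset.prod_congr rfl (fun l _ => max_eq_left (le_of_lt (hpos l))),
          Finset.prod_congr rfl (fun l _ => max_eq_left (le_of_lt (hz'pos l)))]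
        refine prod_two_point_lt _ _ i0 k hki0 (fun l => hpos l) (fun l => hz'pos l) ?_ ?_
        · intro l hli0 hlk
          rw [hz'u l, if_neg hli0, if_neg hlk]; ring
        · rw [hg1, hg2]
          have e1 : gu v wst i0 - d i0 = β := by rw [hβ, hu0l i0]
          have e2 : gu v wst k - d k = u0 k := (hu0l k).symm
          rw [e1, e2]
          have hkey : 0 < δ * (u0 k - β - δ) := mul_pos hδpos (by linarith)
          nlinarith [hkey]
      exact absurd (hmax z' hz'SP) (not_le.mpr hF)

end L2

section Bridge
variable {n m T : ℕ} (v : Fin n → Fin m → ℝ) (st : Fin m → Fin T → ℝ) (s : Fin m → ℝ)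

lemma toSP (y : Fin n → Fin m → Fin T → ℝ) (hy : FeasibleMP n m T st s y) :
    SPf (fun j => min (s j) (∑ t, st j t)) (fun i j => ∑ t, y i j t) ∧
    ∀ i, gu v (fun i j => ∑ t, y i j t) i = ∑ t, ∑ j, v i j * y i j t := by
  constructor
  · constructor
    · intro i j; exact Finset.sum_nonneg (fun t _ => hy.1 i j t)
    · intro j
      have hcomm : ∑ i, ∑ t, y i j t = ∑ t, ∑ i, y i j t := Finset.sum_comm
      rw [hcomm]
      refine le_min (hy.2.2 j) ?_
      exact Finset.sum_le_sum (fun t _ => hy.2.1 j t)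
  · intro i
    unfold gu
    calc ∑ j, v i j * ∑ t, y i j t = ∑ j, ∑ t, v i j * y i j t :=
          Finset.sum_congr rfl (fun j _ => Finset.mul_sum _ _ _)
      _ = ∑ t, ∑ j, v i j * y i j t := Finset.sum_comm

lemma toMP (hst : ∀ j t, 0 ≤ st j t) (hs : ∀ j, 0 ≤ s j)
    (w : Fin n → Fin m → ℝ) (hw : SPf (fun j => min (s j) (∑ t, st j t)) w) :
    ∃ y, FeasibleMP n m T st s y ∧ ∀ i, (∑ t, ∑ j, v i j * y i j t) = gu v w i := by
  classical
  obtain ⟨S, hSfun⟩ : ∃ f : Fin m → ℝ, f = fun j => ∑ t, st j t := ⟨_, rfl⟩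
  have hSj : ∀ j, S j = ∑ t, st j t := fun j => by rw [hSfun]
  obtain ⟨y, hyfun⟩ : ∃ f : Fin n → Fin m → Fin T → ℝ,
      f = fun i j t => w i j / S j * st j t := ⟨_, rfl⟩
  have hyd : ∀ i j t, y i j t = w i j / S j * st j t := fun i j t => by rw [hyfun]
  have hwcol : ∀ j, ∑ i, w i j ≤ min (s j) (S j) := fun j => by
    rw [hSj]; exact hw.2 j
  have hw0 : ∀ i j, S j = 0 → w i j = 0 := by
    intro i j hS0
    have h1 : w i j ≤ ∑ l, w l j :=
      Finset.single_le_sum (fun l _ => hw.1 l j) (Finset.mem_univ i)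
    have h2 := hwcol j
    have h3 : min (s j) (S j) ≤ 0 := le_trans (min_le_right _ _) (le_of_eq hS0)
    have h4 := hw.1 i j
    exact le_antisymm (by linarith) h4
  have hSnn : ∀ j, 0 ≤ S j := fun j => by
    rw [hSj]; exact Finset.sum_nonneg (fun t _ => hst j t)
  have hsumt : ∀ i j, ∑ t, y i j t = w i j := by
    intro i j
    by_cases hS0 : S j = 0
    · have hz : ∀ t, y i j t = 0 := by
        intro t; rw [hyd, hw0 i j hS0]; simp
      rw [Finset.sum_congr rfl (fun t _ => hz t), Finset.sum_const_zero, hw0 i j hS0]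
    · have he : ∑ t, y i j t = w i j / S j * S j :=
        calc ∑ t, y i j t = ∑ t, w i j / S j * st j t :=
              Finset.sum_congr rfl (fun t _ => hyd i j t)
          _ = w i j / S j * ∑ t, st j t := (Finset.mul_sum _ _ _).symm
          _ = w i j / S j * S j := by rw [← hSj]
      rw [he, div_mul_cancel₀ _ hS0]
  have hcolsum : ∀ j t, ∑ i, y i j t = (∑ i, w i j) / S j * st j t := by
    intro j t
    rw [Finset.sum_div, Finset.sum_mul]
    exact Finset.sum_congr rfl (fun i _ => hyd i j t)
  have hwcolnn : ∀ j, 0 ≤ ∑ i, w i j := fun j => Finset.sum_nonneg (fun i _ => hw.1 i j)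
  refine ⟨y, ⟨?_, ?_, ?_⟩, ?_⟩
  · intro i j t
    rw [hyd]
    exact mul_nonneg (div_nonneg (hw.1 i j) (hSnn j)) (hst j t)
  · intro j t
    rw [hcolsum j t]
    by_cases hS0 : S j = 0
    · rw [hS0]
      simp [hst j t]
    · have hSpos : 0 < S j := lt_of_le_of_ne (hSnn j) (Ne.symm hS0)
      have h1 : (∑ i, w i j) / S j ≤ 1 := by
        rw [div_le_one hSpos]
        exact le_trans (hwcol j) (min_le_right _ _)
      exact mul_le_of_le_one_left (hst j t) h1
  · intro j
    have he : ∑ t, ∑ i, y i j t = (∑ i, w i j) / S j * S j :=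
      calc ∑ t, ∑ i, y i j t = ∑ t, (∑ i, w i j) / S j * st j t :=
            Finset.sum_congr rfl (fun t _ => hcolsum j t)
        _ = (∑ i, w i j) / S j * ∑ t, st j t := (Finset.mul_sum _ _ _).symm
        _ = (∑ i, w i j) / S j * S j := by rw [← hSj]
    rw [he]
    by_cases hS0 : S j = 0
    · rw [hS0]; simp [hs j]
    · rw [div_mul_cancel₀ _ hS0]
      exact le_trans (hwcol j) (min_le_left _ _)
  · intro i
    unfold gu
    calc ∑ t, ∑ j, v i j * y i j t = ∑ j, ∑ t, v i j * y i j t := Finset.sum_comm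
      _ = ∑ j, v i j * ∑ t, y i j t :=
          Finset.sum_congr rfl (fun j _ => (Finset.mul_sum _ _ _).symm)
      _ = ∑ j, v i j * w i j := Finset.sum_congr rfl (fun j _ => by rw [hsumt i j])

end Bridge

/-- helper: Fobj equals the plain product when all utilities are positive -/
lemma Fobj_eq_prod {n m : ℕ} (v : Fin n → Fin m → ℝ) (d : Fin n → ℝ)
    (w : Fin n → Fin m → ℝ) (hp : ∀ i, 0 < gu v w i - d i) :
    Fobj v d w = ∏ i, (gu v w i - d i) :=
  Finset.prod_congr rfl (fun i _ => max_eq_left (le_of_lt (hp i)))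

theorem leximin_iff_mnw_multi_period
    (n m T : ℕ) (v : Fin n → Fin m → ℝ) (d : Fin n → ℝ)
    (st : Fin m → Fin T → ℝ) (s : Fin m → ℝ)
    (hv : ∀ i j, v i j = 0 ∨ v i j = 1) (hd : ∀ i, 0 ≤ d i)
    (hexist : ∃ y, FeasibleMP n m T st s y ∧
      ∀ i, 0 < (∑ t, ∑ j, v i j * y i j t) - d i)
    (x : Fin n → Fin m → Fin T → ℝ) (hxf : FeasibleMP n m T st s x)
    (hupos : ∀ i, 0 < (∑ t, ∑ j, v i j * x i j t) - d i) :
    (¬ ∃ y, FeasibleMP n m T st s y ∧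
        LexGt (fun i => (∑ t, ∑ j, v i j * y i j t) - d i)
          (fun i => (∑ t, ∑ j, v i j * x i j t) - d i))
    ↔
    (∀ y, FeasibleMP n m T st s y →
      (∀ i, 0 < (∑ t, ∑ j, v i j * y i j t) - d i) →
      ∏ i, ((∑ t, ∑ j, v i j * y i j t) - d i)
        ≤ ∏ i, ((∑ t, ∑ j, v i j * x i j t) - d i)) := by
  classical
  rcases Nat.eq_zero_or_pos n with hn0 | _
  · subst hn0
    constructor
    · intro _ y _ _
      simp
    · intro _ h
      obtain ⟨y, _, k, _⟩ := h
      exact k.elim0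
  · have hst : ∀ j t, 0 ≤ st j t := by
      intro j t
      obtain ⟨y, hy, _⟩ := hexist
      exact le_trans (Finset.sum_nonneg (fun i _ => hy.1 i j t)) (hy.2.1 j t)
    have hs : ∀ j, 0 ≤ s j := by
      intro j
      obtain ⟨y, hy, _⟩ := hexist
      exact le_trans (Finset.sum_nonneg (fun t _ =>
        Finset.sum_nonneg (fun i _ => hy.1 i j t))) (hy.2.2 j)
    obtain ⟨y0, hy0f, hy0pos⟩ := hexist
    obtain ⟨hw0SP, hw0gu⟩ := toSP v st s y0 hy0f
    obtain ⟨wst, hwstSP, hmax⟩ :=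
      exists_nash v (fun j => min (s j) (∑ t, st j t)) d _ hw0SP
    have hw0pos : ∀ i, 0 < gu v (fun i j => ∑ t, y0 i j t) i - d i := by
      intro i; rw [hw0gu i]; exact hy0pos i
    have hF0pos : 0 < Fobj v d (fun i j => ∑ t, y0 i j t) := by
      unfold Fobj
      exact Finset.prod_pos
        (fun i _ => lt_of_lt_of_le (hw0pos i) (le_max_left _ _))
    have hFstpos : 0 < Fobj v d wst := lt_of_lt_of_le hF0pos (hmax _ hw0SP)
    have hstpos : ∀ i, 0 < gu v wst i - d i := by
      intro i
      by_contra hle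
      push_neg at hle
      have hzero : Fobj v d wst = 0 :=
        Finset.prod_eq_zero (Finset.mem_univ i) (max_eq_right hle)
      rw [hzero] at hFstpos
      exact lt_irrefl _ hFstpos
    obtain ⟨hwxSP, hwxgu⟩ := toSP v st s x hxf
    have hxpos : ∀ i, 0 < gu v (fun i j => ∑ t, x i j t) i - d i := by
      intro i; rw [hwxgu i]; exact hupos i
    obtain ⟨yst, hystf, hystu⟩ := toMP v st s hst hs wst hwstSP
    have hprodx : ∏ i, ((∑ t, ∑ j, v i j * x i j t) - d i)
        = ∏ i, (gu v (fun i j => ∑ t, x i j t) i - d i) :=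
      Finset.prod_congr rfl (fun i _ => by rw [hwxgu i])
    constructor
    · -- leximin optimal → Nash maximal
      intro hLHS y hyf hypos
      obtain ⟨hwySP, hwygu⟩ := toSP v st s y hyf
      have hypos' : ∀ i, 0 < gu v (fun i j => ∑ t, y i j t) i - d i := by
        intro i; rw [hwygu i]; exact hypos i
      have h1 : ∏ i, ((∑ t, ∑ j, v i j * y i j t) - d i) ≤ Fobj v d wst := by
        have e : ∏ i, ((∑ t, ∑ j, v i j * y i j t) - d i)
            = Fobj v d (fun i j => ∑ t, y i j t) := by
          rw [Fobj_eq_prod v d _ hypos']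
          exact Finset.prod_congr rfl (fun i _ => by rw [hwygu i])
        rw [e]
        exact hmax _ hwySP
      have hkey : Fobj v d wst = ∏ i, ((∑ t, ∑ j, v i j * x i j t) - d i) := by
        rcases sorted_trichotomy (fun i => gu v (fun i j => ∑ t, x i j t) i - d i)
          (fun i => gu v wst i - d i) with hsorteq | hxb | hsb
        · calc Fobj v d wst = ∏ i, (gu v wst i - d i) := Fobj_eq_prod v d wst hstpos
            _ = ∏ i, sortedVal (fun i => gu v wst i - d i) i := (prod_sortedVal _).symm
            _ = ∏ i, sortedVal (fun i => gu v (fun i j => ∑ t, x i j t) i - d i) i :=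
                Finset.prod_congr rfl (fun i _ => (hsorteq i).symm)
            _ = ∏ i, (gu v (fun i j => ∑ t, x i j t) i - d i) := prod_sortedVal _
            _ = ∏ i, ((∑ t, ∑ j, v i j * x i j t) - d i) := hprodx.symm
        · exact absurd hxb (nash_is_leximin v _ d hv hwstSP hmax hstpos hwxSP)
        · exfalso
          apply hLHS
          refine ⟨yst, hystf, ?_⟩
          have e1 : (fun i => (∑ t, ∑ j, v i j * yst i j t) - d i)
              = (fun i => gu v wst i - d i) := funext (fun i => by rw [hystu i])
          have e2 : (fun i => (∑ t, ∑ j, v i j * x i j t) - d i)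
              = (fun i => gu v (fun i j => ∑ t, x i j t) i - d i) :=
            funext (fun i => by rw [hwxgu i])
          rw [e1, e2]
          exact hsb
      rw [← hkey]
      exact h1
    · -- Nash maximal → leximin optimal
      intro hRHS
      rintro ⟨y, hyf, hylex⟩
      obtain ⟨hwySP, hwygu⟩ := toSP v st s y hyf
      have h2 : ∏ i, (gu v wst i - d i) ≤ ∏ i, ((∑ t, ∑ j, v i j * x i j t) - d i) := by
        have hh := hRHS yst hystf (fun i => by rw [hystu i]; exact hstpos i)
        have e : ∏ i, ((∑ t, ∑ j, v i j * yst i j t) - d i) = ∏ i, (gu v wst i - d i) :=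
          Finset.prod_congr rfl (fun i _ => by rw [hystu i])
        rw [e] at hh
        exact hh
      have h1 : ∏ i, ((∑ t, ∑ j, v i j * x i j t) - d i) ≤ ∏ i, (gu v wst i - d i) := by
        rw [hprodx, ← Fobj_eq_prod v d _ hxpos, ← Fobj_eq_prod v d wst hstpos]
        exact hmax _ hwxSP
      have hequal : ∀ i, gu v (fun i j => ∑ t, x i j t) i - d i = gu v wst i - d i := by
        refine nash_unique v _ d hwstSP hwxSP hmax hstpos hxpos ?_
        rw [← hprodx]
        exact le_antisymm h1 h2
      apply nash_is_leximin v (fun j => min (s j) (∑ t, st j t)) d hv hwstSP hmax hstpos hwySP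
      have e2 : (fun i => gu v (fun i j => ∑ t, y i j t) i - d i)
          = (fun i => (∑ t, ∑ j, v i j * y i j t) - d i) :=
        funext (fun i => by rw [hwygu i])
      have e3 : (fun i => gu v wst i - d i)
          = (fun i => (∑ t, ∑ j, v i j * x i j t) - d i) :=
        funext (fun i => by rw [← hequal i, hwxgu i])
      rw [e2, e3]
      exact hylex
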